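/- arXiv:1908.02438 — 4 statements merged into one kernel-verified Lean document; each statement's English description precedes it below -/
import Mathlib

section
/- Let ι : A → B be an inclusion of Noetherian integral domains with A integrally closed (normal), such that the induced map Spec(B) → Spec(A) is surjective. If b ∈ B lies in the fraction field of A (i.e., b is in the image of Frac(A) under the induced map on fraction fields), then b ∈ A. -/
open IsLocalization

/-- Key lemma: in a Noetherian integrally closed domain, if `a ∉ (c)` with `c ≠ 0`,
then there is a prime `P` with `m ∈ P`, `s ∉ P` and `m * a = s * c`. -/
theorem key_lemma {A : Type*} [CommRing A] [IsDomain A] [IsNoetherianRing A]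
    (hIC : IsIntegrallyClosed A) (a c : A) (hc : c ≠ 0) (ha : a ∉ Ideal.span {c}) :
    ∃ P : Ideal A, P.IsPrime ∧ ∃ m ∈ P, ∃ s ∉ P, m * a = s * c := by
  classical
  haveI := hIC
  set I := Ideal.span {c} with hI
  have hxa : (Ideal.Quotient.mk I a) ≠ 0 := by
    simpa [Ideal.Quotient.eq_zero_iff_mem] using ha
  obtain ⟨P, hP, hle⟩ := exists_le_isAssociatedPrime_of_isNoetherianRing A _ hxa
  obtain ⟨hPprime, e', he'⟩ := isAssociatedPrime_iff.mp hP
  obtain ⟨e, rfl⟩ := Ideal.Quotient.mk_surjective e'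
  have hsm : ∀ (r x : A), r • (Ideal.Quotient.mk I x) = Ideal.Quotient.mk I (r * x) := by
    intro r x; rfl
  have hPmem : ∀ r : A, r ∈ P ↔ r * e ∈ I := by
    intro r
    rw [he', Submodule.mem_colon_singleton, Submodule.mem_bot, hsm, Ideal.Quotient.eq_zero_iff_mem]
  have hce : c ∈ P := (hPmem c).mpr (Ideal.mem_span_singleton'.mpr ⟨e, mul_comm e c⟩)
  have heI : e ∉ I := fun h =>
    hPprime.ne_top ((Ideal.eq_top_iff_one P).mpr ((hPmem 1).mpr (by simpa using h)))
  have haP : ∀ s : A, s * a ∈ I → s ∈ P := by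
    intro s hs
    apply hle
    rw [Submodule.mem_colon_singleton, Submodule.mem_bot, hsm, Ideal.Quotient.eq_zero_iff_mem]
    exact hs
  by_cases hcase : ∀ t ∈ P, ∀ y : A, y * c = t * e → y ∈ P
  · -- then e/c is integral over A, hence in A, contradicting e ∉ (c)
    exfalso
    set K := FractionRing A
    have hcK : algebraMap A K c ≠ 0 :=
      (map_ne_zero_iff _ (IsFractionRing.injective A K)).mpr hc
    set x : K := algebraMap A K e / algebraMap A K c with hxdef
    set N : Submodule A K := Submodule.map (Algebra.linearMap A K) (P : Submodule A A) with hN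
    have hNfg : N.FG := (IsNoetherian.noetherian (P : Submodule A A)).map _
    have hNbot : N ≠ ⊥ := by
      intro h
      have hcN : algebraMap A K c ∈ N := Submodule.mem_map_of_mem hce
      rw [h, Submodule.mem_bot] at hcN
      exact hcK hcN
    have hxN : ∀ n ∈ N, x • n ∈ N := by
      rintro n hn
      obtain ⟨t, htP, rfl⟩ := hn
      obtain ⟨y, hy⟩ := Ideal.mem_span_singleton'.mp ((hPmem t).mp htP)
      have hyP : y ∈ P := hcase t htP y hy
      have hxy : x • (Algebra.linearMap A K) t = (Algebra.linearMap A K) y := by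
        show x * algebraMap A K t = algebraMap A K y
        rw [hxdef, div_mul_eq_mul_div, div_eq_iff hcK, ← map_mul, ← map_mul]
        exact congrArg _ (by linear_combination -hy)
      rw [hxy]
      exact Submodule.mem_map_of_mem hyP
    have hxint : IsIntegral A x := isIntegral_of_smul_mem_submodule N hNbot hNfg x hxN
    obtain ⟨d, hd⟩ := IsIntegrallyClosed.isIntegral_iff.mp hxint
    apply heI
    refine Ideal.mem_span_singleton'.mpr ⟨d, ?_⟩
    apply IsFractionRing.injective A K
    rw [map_mul, hd, hxdef, div_mul_cancel₀ _ hcK]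
  · push_neg at hcase
    obtain ⟨t, htP, y, hyc, hyP⟩ := hcase
    haveI := hPprime
    set R := Localization.AtPrime P with hR
    haveI : IsNoetherianRing R :=
      IsLocalization.isNoetherianRing P.primeCompl R inferInstance
    have hinjR : Function.Injective (algebraMap A R) :=
      IsLocalization.injective R P.primeCompl_le_nonZeroDivisors
    have hmax : IsLocalRing.maximalIdeal R = Ideal.span {algebraMap A R t} := by
      rw [← Localization.AtPrime.map_eq_maximalIdeal]
      apply le_antisymm
      · rw [Ideal.map_le_iff_le_comap]
        intro m hm
        rw [Ideal.mem_comap]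
        obtain ⟨w, hw⟩ := Ideal.mem_span_singleton'.mp ((hPmem m).mp hm)
        have hmy : m * y = t * w :=
          mul_right_cancel₀ hc (by linear_combination m * hyc - t * hw)
        have hyu : IsUnit (algebraMap A R y) :=
          IsLocalization.map_units R (⟨y, hyP⟩ : P.primeCompl)
        obtain ⟨u, hu⟩ := hyu
        have h2 : algebraMap A R m * ↑u = algebraMap A R t * algebraMap A R w := by
          rw [hu, ← map_mul, ← map_mul, hmy]
        refine Ideal.mem_span_singleton'.mpr ⟨algebraMap A R w * ↑u⁻¹, ?_⟩
        calc algebraMap A R w * ↑u⁻¹ * algebraMap A R t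
            = algebraMap A R t * algebraMap A R w * ↑u⁻¹ := by ring
          _ = algebraMap A R m * ↑u * ↑u⁻¹ := by rw [h2]
          _ = algebraMap A R m := by rw [mul_assoc, u.mul_inv, mul_one]
      · rw [Ideal.span_le]
        exact Set.singleton_subset_iff.mpr (Ideal.mem_map_of_mem _ htP)
    have hprin : (IsLocalRing.maximalIdeal R).IsPrincipal := ⟨⟨algebraMap A R t, hmax⟩⟩
    haveI hVR : ValuationRing R :=
      ((tfae_of_isNoetherianRing_of_isLocalRing_of_isDomain R).out 4 1).mp hprin
    have hnc : ∀ z : R, algebraMap A R a ≠ algebraMap A R c * z := by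
      intro z hz
      obtain ⟨⟨u, s⟩, hus⟩ := IsLocalization.mk'_surjective P.primeCompl z
      obtain rfl : IsLocalization.mk' R u s = z := hus
      have h3 : algebraMap A R (a * s) = algebraMap A R (c * u) := by
        rw [map_mul, map_mul, hz, mul_assoc, IsLocalization.mk'_spec]
      have h4 : a * (s : A) = c * u := hinjR h3
      exact s.2 (haP s (Ideal.mem_span_singleton'.mpr ⟨u, by linear_combination -h4⟩))
    obtain ⟨z, hz | hz⟩ := ValuationRing.cond (algebraMap A R a) (algebraMap A R c)
    · -- a * z = c
      have hznu : ¬ IsUnit z := by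
        rintro ⟨u, rfl⟩
        exact hnc ↑u⁻¹ (by rw [← hz, mul_assoc, u.mul_inv, mul_one])
      have hzm : z ∈ IsLocalRing.maximalIdeal R := hznu
      rw [← Localization.AtPrime.map_eq_maximalIdeal] at hzm
      obtain ⟨⟨⟨m, hmP⟩, s⟩, hms⟩ :=
        (IsLocalization.mem_map_algebraMap_iff P.primeCompl R).mp hzm
      have h5 : algebraMap A R (a * m) = algebraMap A R (c * s) := by
        rw [map_mul, map_mul, ← hms, ← mul_assoc, hz]
      have h6 : a * m = c * s := hinjR h5
      exact ⟨P, hPprime, m, hmP, s, s.2, by linear_combination h6⟩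
    · exact absurd hz.symm (hnc z)

/-- Let `ι : A → B` be an inclusion of Noetherian integral domains with `A`
integrally closed (normal), such that the induced map `Spec B → Spec A` is surjective
(every prime of `A` is the contraction of a prime of `B`).  If `b ∈ B` lies in the fraction
field of `A` (i.e. `c • b = a` in `B` for some `a c : A` with `c ≠ 0`), then `b` lies in
the image of `A`. -/
theorem stmt0 (A B : Type*) [CommRing A] [CommRing B] [IsDomain A] [IsDomain B]
    [IsNoetherianRing A] [IsNoetherianRing B] [Algebra A B]
    (hinj : Function.Injective (algebraMap A B))
    (hIC : IsIntegrallyClosed A)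
    (hsurj : ∀ p : Ideal A, p.IsPrime → ∃ q : Ideal B, q.IsPrime ∧ q.comap (algebraMap A B) = p)
    (b : B) (a c : A) (hc : c ≠ 0) (hb : algebraMap A B c * b = algebraMap A B a) :
    b ∈ (algebraMap A B).range := by
  have hcB : algebraMap A B c ≠ 0 := fun h0 => hc (hinj (h0.trans (map_zero _).symm))
  by_contra hbr
  have hanc : a ∉ Ideal.span {c} := by
    intro h
    obtain ⟨d, hd⟩ := Ideal.mem_span_singleton'.mp h
    apply hbr
    refine ⟨d, ?_⟩
    have h1 : algebraMap A B c * algebraMap A B d = algebraMap A B c * b := by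
      rw [hb, ← map_mul, ← hd, mul_comm d c]
    exact mul_left_cancel₀ hcB h1
  obtain ⟨P, hPp, m, hmP, s, hsP, hms⟩ := key_lemma hIC a c hc hanc
  obtain ⟨q, hq, hqc⟩ := hsurj P hPp
  have h7 : algebraMap A B c * (b * algebraMap A B m) = algebraMap A B c * algebraMap A B s := by
    rw [← mul_assoc, hb, ← map_mul, ← map_mul]
    exact congrArg _ (by linear_combination hms)
  have h8 : b * algebraMap A B m = algebraMap A B s := mul_left_cancel₀ hcB h7
  have hmq : algebraMap A B m ∈ q := by rw [← hqc] at hmP; exact hmP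
  have hsq : algebraMap A B s ∈ q := h8 ▸ Ideal.mul_mem_left q b hmq
  have : s ∈ P := by rw [← hqc]; exact hsq
  exact hsP this
end

section
/- Let k be a field of characteristic p > 0, B = k[x]/(x^{p^n}), and A ⊆ B a k-subalgebra with maximal ideal m_A ≠ 0. Let r be the smallest integer such that m_A contains an element a with a ∈ m_B^r \ m_B^{r+1}. If B is free as an A-module, then p^n ≤ r · dim_k(A). -/
open Polynomial

set_option synthInstance.maxHeartbeats 1000000
set_option maxHeartbeats 2000000

section aux
variable {k : Type*} [Field k]

lemma span_pow_eq_top' {W : Type*} [CommRing W] [Algebra k W]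
    (φ : Polynomial k →ₐ[k] W) (hsurj : Function.Surjective φ) (m : ℕ)
    (hm : φ X ^ m = 0) :
    Submodule.span k (Set.range fun i : Fin m => φ X ^ (i : ℕ)) = ⊤ := by
  rw [eq_top_iff]
  rintro w -
  obtain ⟨g, rfl⟩ := hsurj w
  have hmon : (X ^ m : Polynomial k).Monic := monic_X_pow m
  have hg : g %ₘ (X ^ m) + X ^ m * (g /ₘ (X ^ m)) = g := modByMonic_add_div g (X ^ m)
  have hdeg : (g %ₘ (X ^ m)).degree < (X ^ m : Polynomial k).degree :=
    degree_modByMonic_lt g hmon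
  rw [degree_X_pow] at hdeg
  have hφ : φ g = φ (g %ₘ (X ^ m)) := by
    conv_lhs => rw [← hg]
    rw [map_add, map_mul, map_pow, hm, zero_mul, add_zero]
  rw [hφ]
  set h := g %ₘ (X ^ m) with hh
  have hnd : h.natDegree < m ∨ h = 0 := by
    rcases eq_or_ne h 0 with h0 | h0
    · exact Or.inr h0
    · exact Or.inl (by exact_mod_cast (degree_eq_natDegree h0 ▸ hdeg))
  rcases hnd with hnd | h0
  · have hrepr : h = ∑ i ∈ Finset.range m, Polynomial.C (h.coeff i) * X ^ i := by
      conv_lhs => rw [h.as_sum_range' m hnd]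
      simp [Polynomial.C_mul_X_pow_eq_monomial]
    rw [hrepr, map_sum]
    refine Submodule.sum_mem _ fun i hi => ?_
    have hC : φ (C (h.coeff i)) = algebraMap k W (h.coeff i) := by
      rw [← Polynomial.algebraMap_eq]; exact φ.commutes _
    rw [map_mul, map_pow, hC, ← Algebra.smul_def]
    exact Submodule.smul_mem _ _ (Submodule.subset_span ⟨⟨i, Finset.mem_range.mp hi⟩, rfl⟩)
  · simp [h0]

lemma stmt4_aux (m : ℕ) (hm : 0 < m)
    (A : Subalgebra k (Polynomial k ⧸ Ideal.span {(X : Polynomial k) ^ m}))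
    (hfree : Module.Free A (Polynomial k ⧸ Ideal.span {(X : Polynomial k) ^ m}))
    (r : ℕ) (a : Polynomial k ⧸ Ideal.span {(X : Polynomial k) ^ m})
    (haA : a ∈ A) (hanil : a ^ m = 0)
    (hdvd : a ∣ (Ideal.Quotient.mk (Ideal.span {(X : Polynomial k) ^ m}) X) ^ r) :
    m ≤ r * Module.finrank k A := by
  have hXne : (X : Polynomial k) ^ m ≠ 0 := pow_ne_zero _ X_ne_zero
  haveI : Nontrivial (Polynomial k ⧸ Ideal.span {(X : Polynomial k) ^ m}) := by
    refine Ideal.Quotient.nontrivial_iff.mpr ?_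
    rw [Ne, Ideal.span_singleton_eq_top]
    intro h
    exact Polynomial.not_isUnit_of_natDegree_pos _ (by simpa using hm) h
  haveI : Nontrivial A := inferInstance
  haveI hfinQ : Module.Finite k (Polynomial k ⧸ Ideal.span {(X : Polynomial k) ^ m}) :=
    Module.Finite.of_basis (AdjoinRoot.powerBasis hXne).basis
  have hfrQ : Module.finrank k (Polynomial k ⧸ Ideal.span {(X : Polynomial k) ^ m}) = m := by
    have := (AdjoinRoot.powerBasis hXne).finrank
    simp at this
    exact this
  haveI : Module.Finite A (Polynomial k ⧸ Ideal.span {(X : Polynomial k) ^ m}) :=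
    Module.Finite.of_restrictScalars_finite k A _
  set ι := Module.Free.ChooseBasisIndex A
    (Polynomial k ⧸ Ideal.span {(X : Polynomial k) ^ m}) with hι
  set b : Module.Basis ι A (Polynomial k ⧸ Ideal.span {(X : Polynomial k) ^ m}) :=
    Module.Free.chooseBasis A _ with hb
  set Ir : Ideal (Polynomial k ⧸ Ideal.span {(X : Polynomial k) ^ m}) :=
    Ideal.span {(Ideal.Quotient.mk (Ideal.span {(X : Polynomial k) ^ m}) X) ^ r} with hIr
  set π : (Polynomial k ⧸ Ideal.span {(X : Polynomial k) ^ m}) →ₐ[k] _ :=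
    Ideal.Quotient.mkₐ k Ir with hπ
  haveI : Module.Finite k ((Polynomial k ⧸ Ideal.span {(X : Polynomial k) ^ m}) ⧸ Ir) :=
    Module.Finite.of_surjective π.toLinearMap (Ideal.Quotient.mkₐ_surjective k Ir)
  have hli : LinearIndependent k (fun i : ι => π (b i)) := by
    rw [Fintype.linearIndependent_iff]
    intro c hc i
    have hmem : (∑ j, c j • b j) ∈ Ir := by
      rw [← Ideal.Quotient.eq_zero_iff_mem (I := Ir)]
      have : π (∑ j, c j • b j) = ∑ j, c j • π (b j) := by
        rw [map_sum]; exact Finset.sum_congr rfl fun j _ => π.toLinearMap.map_smul _ _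
      exact this.trans hc
    rw [hIr, Ideal.mem_span_singleton] at hmem
    obtain ⟨t, ht⟩ := hmem
    obtain ⟨u, hu⟩ := hdvd
    set abar : A := ⟨a, haA⟩ with habar
    have key : (∑ j, c j • b j) = abar • (u * t) := by
      rw [ht, hu, mul_assoc]; rfl
    have hL : b.repr (∑ j, c j • b j) i = algebraMap k A (c i) := by
      rw [map_sum]
      simp only [Finsupp.coe_finset_sum, Finset.sum_apply]
      rw [Finset.sum_eq_single i]
      · rw [← algebraMap_smul A (c i) (b i), map_smul, Finsupp.smul_apply,
          b.repr_self, Finsupp.single_eq_same, smul_eq_mul, mul_one]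
      · intro j _ hj
        rw [← algebraMap_smul A (c j) (b j), map_smul, Finsupp.smul_apply,
          b.repr_self, Finsupp.single_eq_of_ne hj.symm, smul_zero]
      · intro h; exact absurd (Finset.mem_univ i) h
    have hR : b.repr (abar • (u * t)) i = abar * b.repr (u * t) i := by
      rw [map_smul]; rfl
    have heq : algebraMap k A (c i) = abar * b.repr (u * t) i := by
      rw [← hL, ← hR, key]
    have habarnil : abar ^ m = 0 := by
      apply Subtype.ext
      show (abar : Polynomial k ⧸ Ideal.span {(X : Polynomial k) ^ m}) ^ m = 0
      exact hanil
    have hz : algebraMap k A (c i ^ m) = 0 := by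
      rw [map_pow, heq, mul_pow, habarnil, zero_mul]
    have : c i ^ m = 0 := by
      have hinj : Function.Injective (algebraMap k A) := (algebraMap k A).injective
      exact hinj (by rw [hz, map_zero])
    exact pow_eq_zero_iff hm.ne' |>.mp this
  have hcard : Fintype.card ι
      ≤ Module.finrank k ((Polynomial k ⧸ Ideal.span {(X : Polynomial k) ^ m}) ⧸ Ir) :=
    hli.fintype_card_le_finrank
  have hQ'r : Module.finrank k
      ((Polynomial k ⧸ Ideal.span {(X : Polynomial k) ^ m}) ⧸ Ir) ≤ r := by
    have hsurj : Function.Surjective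
        (π.comp (Ideal.Quotient.mkₐ k (Ideal.span {(X : Polynomial k) ^ m}))) :=
      (Ideal.Quotient.mkₐ_surjective k Ir).comp (Ideal.Quotient.mkₐ_surjective k _)
    have hzero : (π.comp (Ideal.Quotient.mkₐ k (Ideal.span {(X : Polynomial k) ^ m}))) X ^ r
        = 0 := by
      show π (Ideal.Quotient.mk (Ideal.span {(X : Polynomial k) ^ m}) X) ^ r = 0
      rw [← map_pow, hπ, Ideal.Quotient.mkₐ_eq_mk, Ideal.Quotient.eq_zero_iff_mem]
      exact Ideal.subset_span rfl
    have hspan := span_pow_eq_top' (k := k) (W := (Polynomial k ⧸ Ideal.span {(X : Polynomial k) ^ m}) ⧸ Ir)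
      (π.comp (Ideal.Quotient.mkₐ k (Ideal.span {(X : Polynomial k) ^ m}))) hsurj r hzero
    have := finrank_le_of_span_eq_top hspan
    simpa using this
  have htower : Module.finrank k A
        * Module.finrank A (Polynomial k ⧸ Ideal.span {(X : Polynomial k) ^ m})
      = Module.finrank k (Polynomial k ⧸ Ideal.span {(X : Polynomial k) ^ m}) :=
    Module.finrank_mul_finrank k A _
  have hrank : Module.finrank A (Polynomial k ⧸ Ideal.span {(X : Polynomial k) ^ m})
      = Fintype.card ι :=
    Module.finrank_eq_card_chooseBasisIndex A _
  calc m = Module.finrank k (Polynomial k ⧸ Ideal.span {(X : Polynomial k) ^ m}) := hfrQ.symm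
    _ = Module.finrank k A
        * Module.finrank A (Polynomial k ⧸ Ideal.span {(X : Polynomial k) ^ m}) := htower.symm
    _ = Module.finrank k A * Fintype.card ι := by rw [hrank]
    _ ≤ Module.finrank k A
        * Module.finrank k ((Polynomial k ⧸ Ideal.span {(X : Polynomial k) ^ m}) ⧸ Ir) :=
        Nat.mul_le_mul_left _ hcard
    _ ≤ Module.finrank k A * r := Nat.mul_le_mul_left _ hQ'r
    _ = r * Module.finrank k A := Nat.mul_comm _ _
end aux

/-- Let `k` be a field of characteristic `p > 0`, `B = k[x]/(x^{p^n})` with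
maximal ideal `m_B = (x)`, and `A ⊆ B` a `k`-subalgebra with nonzero maximal ideal
`m_A = A ∩ m_B`.  Let `r` be the smallest integer such that `m_A` contains an element
`a ∈ m_B^r \ m_B^{r+1}`.  If `B` is free as an `A`-module, then `p^n ≤ r * dim_k A`. -/
theorem stmt4 (k : Type*) [Field k] (p : ℕ) [Fact p.Prime] [CharP k p] (n : ℕ)
    (A : Subalgebra k (Polynomial k ⧸ Ideal.span {(X : Polynomial k) ^ p ^ n}))
    (hfree : Module.Free A (Polynomial k ⧸ Ideal.span {(X : Polynomial k) ^ p ^ n}))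
    (mB : Ideal (Polynomial k ⧸ Ideal.span {(X : Polynomial k) ^ p ^ n}))
    (hmB : mB = Ideal.span
      {Ideal.Quotient.mk (Ideal.span {(X : Polynomial k) ^ p ^ n}) X})
    (r : ℕ) (a : Polynomial k ⧸ Ideal.span {(X : Polynomial k) ^ p ^ n})
    -- `a` is an element of `m_A = A ∩ m_B` lying in `m_B^r \ m_B^{r+1}`
    (haA : a ∈ A) (haB : a ∈ mB) (har : a ∈ mB ^ r) (har' : a ∉ mB ^ (r + 1))
    -- minimality of `r`
    (hmin : ∀ r' < r, ¬ ∃ a' , a' ∈ A ∧ a' ∈ mB ∧ a' ∈ mB ^ r' ∧ a' ∉ mB ^ (r' + 1)) :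
    p ^ n ≤ r * Module.finrank k A := by
  have hm : 0 < p ^ n := pow_pos (Fact.out (p := p.Prime)).pos n
  subst hmB
  have hxpow : (Ideal.Quotient.mk (Ideal.span {(X : Polynomial k) ^ p ^ n}) X) ^ p ^ n
      = 0 := by
    rw [← map_pow, Ideal.Quotient.eq_zero_iff_mem]
    exact Ideal.subset_span rfl
  have hanil : a ^ p ^ n = 0 := by
    rw [Ideal.mem_span_singleton] at haB
    obtain ⟨t, ht⟩ := haB
    rw [ht, mul_pow, hxpow, zero_mul]
  have hdvd : a ∣ (Ideal.Quotient.mk (Ideal.span {(X : Polynomial k) ^ p ^ n}) X) ^ r := by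
    rw [Ideal.span_singleton_pow, Ideal.mem_span_singleton] at har
    obtain ⟨v, hv⟩ := har
    have hvu : IsUnit v := by
      by_contra hvu
      apply har'
      rw [Ideal.span_singleton_pow, Ideal.mem_span_singleton]
      have hxv : (Ideal.Quotient.mk (Ideal.span {(X : Polynomial k) ^ p ^ n}) X) ∣ v := by
        obtain ⟨g, rfl⟩ :=
          Ideal.Quotient.mk_surjective (I := Ideal.span {(X : Polynomial k) ^ p ^ n}) v
        rcases eq_or_ne (g.coeff 0) 0 with hc | hc
        · obtain ⟨g', rfl⟩ := X_dvd_iff.mpr hc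
          exact ⟨Ideal.Quotient.mk _ g', by rw [← map_mul]⟩
        · exfalso
          apply hvu
          have hdecomp : Ideal.Quotient.mk (Ideal.span {(X : Polynomial k) ^ p ^ n}) g
              = algebraMap k (Polynomial k ⧸ Ideal.span {(X : Polynomial k) ^ p ^ n})
                  (g.coeff 0)
                + (Ideal.Quotient.mk (Ideal.span {(X : Polynomial k) ^ p ^ n}) X)
                  * Ideal.Quotient.mk (Ideal.span {(X : Polynomial k) ^ p ^ n}) (g.divX) := by
            conv_lhs => rw [← g.X_mul_divX_add]
            rw [map_add, map_mul, add_comm]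
            rfl
          have hnil : IsNilpotent
              ((Ideal.Quotient.mk (Ideal.span {(X : Polynomial k) ^ p ^ n}) X)
                * Ideal.Quotient.mk (Ideal.span {(X : Polynomial k) ^ p ^ n}) g.divX) :=
            ⟨p ^ n, by rw [mul_pow, hxpow, zero_mul]⟩
          have hu : IsUnit (algebraMap k
              (Polynomial k ⧸ Ideal.span {(X : Polynomial k) ^ p ^ n}) (g.coeff 0)) :=
            (IsUnit.mk0 _ hc).map (algebraMap k _)
          rw [hdecomp]
          exact hnil.isUnit_add_left_of_commute hu (Commute.all _ _)
      obtain ⟨w, hw⟩ := hxv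
      refine ⟨w, ?_⟩
      rw [hv, hw, pow_succ]
      ring
    obtain ⟨u, hu⟩ := hvu
    refine ⟨(u⁻¹ : _ˣ), ?_⟩
    rw [hv, ← hu, mul_assoc, ← Units.val_mul, mul_inv_cancel, Units.val_one, mul_one]
  exact stmt4_aux (p ^ n) hm A hfree r a haA hanil hdvd
end

section
/- Let k be a field and G a nontrivial finite commutative group scheme over k of multiplicative type whose Cartier dual is cyclic (i.e., G is a form of μ_n). If G embeds as a closed subgroup scheme of the diagonal torus of GL₂ with trivial intersection with the center of GL₂, and G has order at least 2, then the normalizer of G in GL₂ is the diagonal maximal torus together with possibly the permutation of the two coordinates; in particular if G is not stable under the coordinate swap then the normalizer is the diagonal torus T'. -/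
open Matrix
open scoped TensorProduct

set_option synthInstance.maxHeartbeats 1000000
set_option maxHeartbeats 1000000

/-- The coordinate-swap (Weyl group) element of `GL₂(R)`. -/
noncomputable def swapGL (R : Type) [CommRing R] : GL (Fin 2) R :=
  ⟨!![0, 1; 1, 0], !![0, 1; 1, 0],
    by ext i j; fin_cases i <;> fin_cases j <;> simp [Matrix.mul_apply, Fin.sum_univ_two],
    by ext i j; fin_cases i <;> fin_cases j <;> simp [Matrix.mul_apply, Fin.sum_univ_two]⟩

/-- The central subgroup of scalar matrices in `GL₂(R)`. -/
def scalarSubgroup (R : Type) [CommRing R] : Subgroup (GL (Fin 2) R) :=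
  (Units.map ((Matrix.scalar (Fin 2)) : R →+* Matrix (Fin 2) (Fin 2) R).toMonoidHom).range

lemma auxDiagUnits {S : Type} [CommRing S] (u : GL (Fin 2) S)
    (h01 : (u : Matrix (Fin 2) (Fin 2) S) 0 1 = 0)
    (h10 : (u : Matrix (Fin 2) (Fin 2) S) 1 0 = 0) :
    IsUnit ((u : Matrix (Fin 2) (Fin 2) S) 0 0) ∧ IsUnit ((u : Matrix (Fin 2) (Fin 2) S) 1 1) := by
  have hdet : IsUnit ((u : Matrix (Fin 2) (Fin 2) S).det) :=
    (Matrix.isUnit_iff_isUnit_det _).mp u.isUnit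
  rw [Matrix.det_fin_two, h01, h10] at hdet
  simp only [zero_mul, mul_zero, sub_zero] at hdet
  exact ⟨isUnit_of_mul_isUnit_left hdet, isUnit_of_mul_isUnit_right hdet⟩

lemma auxIncRightInj (k R B : Type) [Field k] [CommRing R] [Nontrivial R] [Algebra k R]
    [CommRing B] [Algebra k B] :
    Function.Injective (Algebra.TensorProduct.includeRight : B →ₐ[k] R ⊗[k] B) := by
  have hkinj : Function.Injective (Algebra.linearMap k R) := by
    intro x y hxy
    by_contra hne
    have hu : IsUnit (x - y) := (sub_ne_zero.mpr hne).isUnit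
    have h0 : (algebraMap k R) (x - y) = 0 := by
      have : (algebraMap k R) x = (algebraMap k R) y := hxy
      rw [map_sub, this, sub_self]
    exact (hu.map (algebraMap k R)).ne_zero h0
  have h2 : Function.Injective (LinearMap.rTensor B (Algebra.linearMap k R)) :=
    Module.Flat.rTensor_preserves_injective_linearMap _ hkinj
  intro b b' hbb
  apply (TensorProduct.lid k B).symm.injective
  apply h2
  have e : ∀ c : B, (LinearMap.rTensor B (Algebra.linearMap k R)) ((TensorProduct.lid k B).symm c)
      = (1 : R) ⊗ₜ[k] c := by
    intro c
    simp
  rw [e, e]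
  simpa using hbb

lemma auxRel {S : Type} [CommRing S] {N Gm M : Matrix (Fin 2) (Fin 2) S}
    (hc : N * Gm = Gm * M)
    (hN01 : N 0 1 = 0) (hN10 : N 1 0 = 0) (hM01 : M 0 1 = 0) (hM10 : M 1 0 = 0) :
    N 0 0 * Gm 0 0 = Gm 0 0 * M 0 0 ∧ N 0 0 * Gm 0 1 = Gm 0 1 * M 1 1 ∧
    N 1 1 * Gm 1 0 = Gm 1 0 * M 0 0 ∧ N 1 1 * Gm 1 1 = Gm 1 1 * M 1 1 := by
  have E : ∀ i j, (N * Gm) i j = (Gm * M) i j := fun i j => by rw [hc]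
  refine ⟨?_, ?_, ?_, ?_⟩
  · simpa [Matrix.mul_apply, Fin.sum_univ_two, hN01, hN10, hM01, hM10] using E 0 0
  · simpa [Matrix.mul_apply, Fin.sum_univ_two, hN01, hN10, hM01, hM10] using E 0 1
  · simpa [Matrix.mul_apply, Fin.sum_univ_two, hN01, hN10, hM01, hM10] using E 1 0
  · simpa [Matrix.mul_apply, Fin.sum_univ_two, hN01, hN10, hM01, hM10] using E 1 1

lemma auxCD {S : Type} [CommRing S] {N Gm M : Matrix (Fin 2) (Fin 2) S}
    (hc : N * Gm = Gm * M) (hdet : IsUnit Gm.det)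
    (hN01 : N 0 1 = 0) (hN10 : N 1 0 = 0) (hM01 : M 0 1 = 0) (hM10 : M 1 0 = 0)
    (hor : IsUnit (Gm 0 1) ∨ IsUnit (Gm 1 0))
    (ha : IsUnit (M 0 0)) (hb : IsUnit (M 1 1)) :
    N 0 0 = M 1 1 ∧ N 1 1 = M 0 0 ∧
      Gm 0 0 * (M 0 0 - M 1 1) = 0 ∧ Gm 1 1 * (M 0 0 - M 1 1) = 0 := by
  obtain ⟨e00, e01, e10, e11⟩ := auxRel hc hN01 hN10 hM01 hM10
  have hdet' : IsUnit (Gm 0 0 * Gm 1 1 - Gm 0 1 * Gm 1 0) := by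
    rwa [Matrix.det_fin_two] at hdet
  have hcd : (Gm 0 0 * Gm 1 1 - Gm 0 1 * Gm 1 0) * (N 0 0 * N 1 1)
      = (Gm 0 0 * Gm 1 1 - Gm 0 1 * Gm 1 0) * (M 0 0 * M 1 1) := by
    linear_combination (N 1 1 * Gm 1 1) * e00 + (Gm 0 0 * M 0 0) * e11
      - (N 1 1 * Gm 1 0) * e01 - (Gm 0 1 * M 1 1) * e10
  have hcd' : N 0 0 * N 1 1 = M 0 0 * M 1 1 := hdet'.mul_left_cancel hcd
  have hkey : N 0 0 = M 1 1 ∧ N 1 1 = M 0 0 := by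
    rcases hor with hq | hr
    · have h1 : N 0 0 = M 1 1 := by
        have h2 : Gm 0 1 * N 0 0 = Gm 0 1 * M 1 1 := by linear_combination e01
        exact hq.mul_left_cancel h2
      refine ⟨h1, ?_⟩
      have h3 : M 1 1 * N 1 1 = M 1 1 * M 0 0 := by
        linear_combination hcd' - N 1 1 * h1
      exact hb.mul_left_cancel h3
    · have h1 : N 1 1 = M 0 0 := by
        have h2 : Gm 1 0 * N 1 1 = Gm 1 0 * M 0 0 := by linear_combination e10
        exact hr.mul_left_cancel h2
      refine ⟨?_, h1⟩
      have h3 : M 0 0 * N 0 0 = M 0 0 * M 1 1 := by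
        linear_combination hcd' - N 0 0 * h1
      exact ha.mul_left_cancel h3
  obtain ⟨h1, h2⟩ := hkey
  refine ⟨h1, h2, ?_, ?_⟩
  · linear_combination Gm 0 0 * h1 - e00
  · linear_combination e11 - Gm 1 1 * h2

lemma auxPS {S : Type} [CommRing S] {N Gm M : Matrix (Fin 2) (Fin 2) S}
    (hc : N * Gm = Gm * M)
    (hN01 : N 0 1 = 0) (hN10 : N 1 0 = 0) (hM01 : M 0 1 = 0) (hM10 : M 1 0 = 0)
    (hp : IsUnit (Gm 0 0)) (hs : IsUnit (Gm 1 1)) :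
    Gm 0 1 * (M 0 0 - M 1 1) = 0 ∧ Gm 1 0 * (M 0 0 - M 1 1) = 0 := by
  obtain ⟨e00, e01, e10, e11⟩ := auxRel hc hN01 hN10 hM01 hM10
  have hca : N 0 0 = M 0 0 := hp.mul_left_cancel (by linear_combination e00)
  have hdb : N 1 1 = M 1 1 := hs.mul_left_cancel (by linear_combination e11)
  constructor
  · linear_combination e01 - Gm 0 1 * hca
  · linear_combination Gm 1 0 * hdb - e10

lemma auxGlue {R S : Type} [CommRing R] [CommRing S] (f : R →+* S) (g : GL (Fin 2) R)
    (ix iy : GL (Fin 2) S)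
    (hy : iy = (Matrix.GeneralLinearGroup.map f g) * ix * (Matrix.GeneralLinearGroup.map f g)⁻¹) :
    (iy : Matrix (Fin 2) (Fin 2) S) *
        ((Matrix.GeneralLinearGroup.map f g : GL (Fin 2) S) : Matrix (Fin 2) (Fin 2) S)
      = ((Matrix.GeneralLinearGroup.map f g : GL (Fin 2) S) : Matrix (Fin 2) (Fin 2) S) *
        (ix : Matrix (Fin 2) (Fin 2) S) := by
  have h1 : iy * Matrix.GeneralLinearGroup.map f g = Matrix.GeneralLinearGroup.map f g * ix := by
    rw [hy]; exact inv_mul_cancel_right _ _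
  exact congrArg Units.val h1

lemma auxMapEntry {R S : Type} [CommRing R] [CommRing S] (f : R →+* S) (g : GL (Fin 2) R)
    (i j : Fin 2) :
    ((Matrix.GeneralLinearGroup.map f g : GL (Fin 2) S) : Matrix (Fin 2) (Fin 2) S) i j
      = f ((g : Matrix (Fin 2) (Fin 2) R) i j) := rfl

lemma auxDetUnit {S : Type} [CommRing S] (u : GL (Fin 2) S) :
    IsUnit ((u : Matrix (Fin 2) (Fin 2) S).det) :=
  (Matrix.isUnit_iff_isUnit_det _).mp u.isUnit

lemma auxCancel {S : Type} [CommRing S] {u v : S} (hu : IsUnit u) (h : u * v = 0) : v = 0 :=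
  hu.mul_left_cancel (by rw [h, mul_zero])

/-- Site computation: conjugation by an invertible matrix with a unit off-diagonal entry
sends the diagonal point `ix` to the swapped diagonal, and forces the diagonal entries of
`g` to annihilate the difference of the entries of `ix`. -/
lemma auxSite {R S : Type} [CommRing R] [CommRing S] (f : R →+* S) (g : GL (Fin 2) R)
    (ix iy : GL (Fin 2) S)
    (hy : iy = (Matrix.GeneralLinearGroup.map f g) * ix * (Matrix.GeneralLinearGroup.map f g)⁻¹)
    (hM01 : (ix : Matrix (Fin 2) (Fin 2) S) 0 1 = 0) (hM10 : (ix : Matrix (Fin 2) (Fin 2) S) 1 0 = 0)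
    (hN01 : (iy : Matrix (Fin 2) (Fin 2) S) 0 1 = 0) (hN10 : (iy : Matrix (Fin 2) (Fin 2) S) 1 0 = 0)
    (hor : IsUnit (f ((g : Matrix (Fin 2) (Fin 2) R) 0 1)) ∨
      IsUnit (f ((g : Matrix (Fin 2) (Fin 2) R) 1 0))) :
    (iy : Matrix (Fin 2) (Fin 2) S) 0 0 = (ix : Matrix (Fin 2) (Fin 2) S) 1 1 ∧
    (iy : Matrix (Fin 2) (Fin 2) S) 1 1 = (ix : Matrix (Fin 2) (Fin 2) S) 0 0 ∧
    f ((g : Matrix (Fin 2) (Fin 2) R) 0 0) *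
      ((ix : Matrix (Fin 2) (Fin 2) S) 0 0 - (ix : Matrix (Fin 2) (Fin 2) S) 1 1) = 0 ∧
    f ((g : Matrix (Fin 2) (Fin 2) R) 1 1) *
      ((ix : Matrix (Fin 2) (Fin 2) S) 0 0 - (ix : Matrix (Fin 2) (Fin 2) S) 1 1) = 0 := by
  have hcomm := auxGlue f g ix iy hy
  obtain ⟨haM, hbM⟩ := auxDiagUnits ix hM01 hM10
  have horS : IsUnit
        (((Matrix.GeneralLinearGroup.map f g : GL (Fin 2) S) : Matrix (Fin 2) (Fin 2) S) 0 1) ∨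
      IsUnit (((Matrix.GeneralLinearGroup.map f g : GL (Fin 2) S) : Matrix (Fin 2) (Fin 2) S) 1 0) := by
    rcases hor with h | h
    · exact Or.inl (by rw [auxMapEntry]; exact h)
    · exact Or.inr (by rw [auxMapEntry]; exact h)
  obtain ⟨h1, h2, h3, h4⟩ := auxCD hcomm (auxDetUnit _) hN01 hN10 hM01 hM10 horS haM hbM
  exact ⟨h1, h2, h3, h4⟩

lemma auxSite2 {R S : Type} [CommRing R] [CommRing S] (f : R →+* S) (g : GL (Fin 2) R)
    (ix iy : GL (Fin 2) S)
    (hy : iy = (Matrix.GeneralLinearGroup.map f g) * ix * (Matrix.GeneralLinearGroup.map f g)⁻¹)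
    (hM01 : (ix : Matrix (Fin 2) (Fin 2) S) 0 1 = 0) (hM10 : (ix : Matrix (Fin 2) (Fin 2) S) 1 0 = 0)
    (hN01 : (iy : Matrix (Fin 2) (Fin 2) S) 0 1 = 0) (hN10 : (iy : Matrix (Fin 2) (Fin 2) S) 1 0 = 0)
    (hp : IsUnit (f ((g : Matrix (Fin 2) (Fin 2) R) 0 0)))
    (hs : IsUnit (f ((g : Matrix (Fin 2) (Fin 2) R) 1 1))) :
    f ((g : Matrix (Fin 2) (Fin 2) R) 0 1) *
      ((ix : Matrix (Fin 2) (Fin 2) S) 0 0 - (ix : Matrix (Fin 2) (Fin 2) S) 1 1) = 0 ∧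
    f ((g : Matrix (Fin 2) (Fin 2) R) 1 0) *
      ((ix : Matrix (Fin 2) (Fin 2) S) 0 0 - (ix : Matrix (Fin 2) (Fin 2) S) 1 1) = 0 := by
  have hcomm := auxGlue f g ix iy hy
  have hp' : IsUnit (((Matrix.GeneralLinearGroup.map f g : GL (Fin 2) S) :
      Matrix (Fin 2) (Fin 2) S) 0 0) := by rw [auxMapEntry]; exact hp
  have hs' : IsUnit (((Matrix.GeneralLinearGroup.map f g : GL (Fin 2) S) :
      Matrix (Fin 2) (Fin 2) S) 1 1) := by rw [auxMapEntry]; exact hs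
  obtain ⟨h1, h2⟩ := auxPS hcomm hN01 hN10 hM01 hM10 hp' hs'
  exact ⟨h1, h2⟩

/-- let `k` be a field and `G` a nontrivial finite commutative group scheme
over `k` of multiplicative type with cyclic Cartier dual (a form of `μ_n`), embedded as a
closed subgroup scheme of the diagonal torus `T' ⊆ GL₂` with trivial intersection with the
centre of `GL₂`.  Then the normalizer of `G` in `GL₂` consists of the diagonal torus
together with possibly the coordinate swap; in particular, if `G` is not stable under the
coordinate swap then the normalizer of `G` in `GL₂` is exactly `T'`. -/
theorem stmt10 (k : Type) [Field k]
    (A : Type) [CommRing A] [Algebra k A] [FiniteDimensional k A]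
    -- the subgroup scheme `G ⊆ GL₂` on points, natural, injective, with subgroup image
    (ι : ∀ (R : Type) (_ : CommRing R) (_ : Algebra k R), (A →ₐ[k] R) → GL (Fin 2) R)
    (hnat : ∀ (R S : Type) (iR : CommRing R) (iS : CommRing S) (aR : Algebra k R)
      (aS : Algebra k S) (f : R →ₐ[k] S) (x : A →ₐ[k] R),
      ι S iS aS (f.comp x) = Matrix.GeneralLinearGroup.map f.toRingHom (ι R iR aR x))
    (hinj : ∀ (R : Type) (iR : CommRing R) (aR : Algebra k R),
      Function.Injective (ι R iR aR))
    (hsub : ∀ (R : Type) (iR : CommRing R) (aR : Algebra k R),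
      ∃ H : Subgroup (GL (Fin 2) R), Set.range (ι R iR aR) = (H : Set (GL (Fin 2) R)))
    -- the identity point of `G` is given by the counit `ε`
    (ε : A →ₐ[k] k)
    (hε : ∀ (R : Type) (iR : CommRing R) (aR : Algebra k R),
      ι R iR aR ((Algebra.ofId k R).comp ε) = 1)
    -- `G` is contained in the diagonal torus `T'`
    (hdiag : ∀ (R : Type) (iR : CommRing R) (aR : Algebra k R) (x : A →ₐ[k] R)
      (i j : Fin 2), i ≠ j → ((ι R iR aR x : GL (Fin 2) R) : Matrix (Fin 2) (Fin 2) R) i j = 0)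
    -- `G ∩ Z(GL₂) = {1}`
    (hcenter : ∀ (R : Type) (iR : CommRing R) (aR : Algebra k R) (x : A →ₐ[k] R),
      ι R iR aR x ∈ scalarSubgroup R → x = (Algebra.ofId k R).comp ε)
    -- `G` is nontrivial
    (hnontriv : ∃ (R : Type) (iR : CommRing R) (aR : Algebra k R) (x : A →ₐ[k] R),
      ι R iR aR x ≠ 1)
    -- `G` is a form of `μ_n`: over some field extension `K` it becomes the group scheme
    -- of `n`-th roots of unity
    (hmu : ∃ (K : Type) (_ : Field K) (_ : Algebra k K) (n : ℕ) (_ : 0 < n),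
      ∀ (S : Type) (iS : CommRing S) (KS : Algebra K S) (aS : Algebra k S)
        (_ : IsScalarTower k K S),
        ∃ e : (A →ₐ[k] S) ≃ {x : Sˣ // x ^ n = 1},
          ∀ x y z : A →ₐ[k] S, ι S iS aS z = ι S iS aS x * ι S iS aS y →
            ((e z : Sˣ) : S) = ((e x : Sˣ) : S) * ((e y : Sˣ) : S)) :
    -- normalizer over any field extension: diagonal or antidiagonal
    (∀ (R : Type) (iR : Field R) (aR : Algebra k R) (g : GL (Fin 2) R),
      (∀ (S : Type) (iS : CommRing S) (aS : Algebra k S) (f : R →ₐ[k] S) (x : A →ₐ[k] S),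
        (Matrix.GeneralLinearGroup.map f.toRingHom g) * ι S iS aS x *
          (Matrix.GeneralLinearGroup.map f.toRingHom g)⁻¹ ∈ Set.range (ι S iS aS)) →
      ((∀ i j : Fin 2, i ≠ j → ((g : GL (Fin 2) R) : Matrix (Fin 2) (Fin 2) R) i j = 0) ∨
        (∀ i : Fin 2, ((g : GL (Fin 2) R) : Matrix (Fin 2) (Fin 2) R) i i = 0))) ∧
    -- in particular: if `G` is not stable under the swap, the normalizer is exactly `T'`
    ((∃ (R : Type) (iR : CommRing R) (aR : Algebra k R) (x : A →ₐ[k] R),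
        swapGL R * ι R iR aR x * (swapGL R)⁻¹ ∉ Set.range (ι R iR aR)) →
      ∀ (R : Type) (iR : CommRing R) (aR : Algebra k R) (g : GL (Fin 2) R),
        (∀ (S : Type) (iS : CommRing S) (aS : Algebra k S) (f : R →ₐ[k] S) (x : A →ₐ[k] S),
          (Matrix.GeneralLinearGroup.map f.toRingHom g) * ι S iS aS x *
            (Matrix.GeneralLinearGroup.map f.toRingHom g)⁻¹ ∈ Set.range (ι S iS aS)) →
        ∀ i j : Fin 2, i ≠ j →
          ((g : GL (Fin 2) R) : Matrix (Fin 2) (Fin 2) R) i j = 0) := by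
  classical
  obtain ⟨R₁, iR₁, aR₁, x₁, hx₁⟩ := hnontriv
  -- a point of `G` whose matrix is scalar is the identity point
  have hscal : ∀ (S : Type) (iS : CommRing S) (aS : Algebra k S) (x : A →ₐ[k] S),
      ((ι S iS aS x : GL (Fin 2) S) : Matrix (Fin 2) (Fin 2) S) 0 1 = 0 →
      ((ι S iS aS x : GL (Fin 2) S) : Matrix (Fin 2) (Fin 2) S) 1 0 = 0 →
      ((ι S iS aS x : GL (Fin 2) S) : Matrix (Fin 2) (Fin 2) S) 0 0 =
        ((ι S iS aS x : GL (Fin 2) S) : Matrix (Fin 2) (Fin 2) S) 1 1 →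
      ι S iS aS x = 1 := by
    intro S iS aS x h01 h10 hdd
    obtain ⟨v, hv⟩ := (auxDiagUnits (ι S iS aS x) h01 h10).1
    have hmem : ι S iS aS x ∈ scalarSubgroup S := by
      refine ⟨v, ?_⟩
      apply Units.ext
      show (Matrix.scalar (Fin 2)) (v : S)
          = ((ι S iS aS x : GL (Fin 2) S) : Matrix (Fin 2) (Fin 2) S)
      rw [Matrix.scalar_apply, hv]
      ext i j
      fin_cases i <;> fin_cases j
      · simp
      · simpa using h01.symm
      · simpa using h10.symm
      · simpa using hdd
    rw [hcenter S iS aS x hmem]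
    exact hε S iS aS
  have hXne : ((ι R₁ iR₁ aR₁ x₁ : GL (Fin 2) R₁) : Matrix (Fin 2) (Fin 2) R₁) 0 0
      ≠ ((ι R₁ iR₁ aR₁ x₁ : GL (Fin 2) R₁) : Matrix (Fin 2) (Fin 2) R₁) 1 1 := by
    intro hdd
    exact hx₁ (hscal R₁ iR₁ aR₁ x₁ (hdiag R₁ iR₁ aR₁ x₁ 0 1 (by decide))
      (hdiag R₁ iR₁ aR₁ x₁ 1 0 (by decide)) hdd)
  have part1 : ∀ (R : Type) (iR : Field R) (aR : Algebra k R) (g : GL (Fin 2) R),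
      (∀ (S : Type) (iS : CommRing S) (aS : Algebra k S) (f : R →ₐ[k] S) (x : A →ₐ[k] S),
        (Matrix.GeneralLinearGroup.map f.toRingHom g) * ι S iS aS x *
          (Matrix.GeneralLinearGroup.map f.toRingHom g)⁻¹ ∈ Set.range (ι S iS aS)) →
      ((∀ i j : Fin 2, i ≠ j → ((g : GL (Fin 2) R) : Matrix (Fin 2) (Fin 2) R) i j = 0) ∨
        (∀ i : Fin 2, ((g : GL (Fin 2) R) : Matrix (Fin 2) (Fin 2) R) i i = 0)) := by
    intro R iR aR g hg
    have main : (IsUnit (((g : GL (Fin 2) R) : Matrix (Fin 2) (Fin 2) R) 0 1) ∨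
        IsUnit (((g : GL (Fin 2) R) : Matrix (Fin 2) (Fin 2) R) 1 0)) →
        ∀ i : Fin 2, ((g : GL (Fin 2) R) : Matrix (Fin 2) (Fin 2) R) i i = 0 := by
      intro hor
      set x' : A →ₐ[k] R ⊗[k] R₁ :=
        (Algebra.TensorProduct.includeRight : R₁ →ₐ[k] R ⊗[k] R₁).comp x₁ with hx'def
      obtain ⟨y, hy⟩ := hg (R ⊗[k] R₁) inferInstance inferInstance
        (Algebra.TensorProduct.includeLeft : R →ₐ[k] R ⊗[k] R₁) x'
      have hu : ι (R ⊗[k] R₁) inferInstance inferInstance x'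
          = Matrix.GeneralLinearGroup.map
              (Algebra.TensorProduct.includeRight : R₁ →ₐ[k] R ⊗[k] R₁).toRingHom
              (ι R₁ iR₁ aR₁ x₁) :=
        hnat R₁ (R ⊗[k] R₁) iR₁ inferInstance aR₁ inferInstance _ x₁
      have hM01 := hdiag (R ⊗[k] R₁) inferInstance inferInstance x' 0 1 (by decide)
      have hM10 := hdiag (R ⊗[k] R₁) inferInstance inferInstance x' 1 0 (by decide)
      have hN01 := hdiag (R ⊗[k] R₁) inferInstance inferInstance y 0 1 (by decide)
      have hN10 := hdiag (R ⊗[k] R₁) inferInstance inferInstance y 1 0 (by decide)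
      have hMa : ((ι (R ⊗[k] R₁) inferInstance inferInstance x' : GL (Fin 2) (R ⊗[k] R₁)) :
            Matrix (Fin 2) (Fin 2) (R ⊗[k] R₁)) 0 0
          = (Algebra.TensorProduct.includeRight : R₁ →ₐ[k] R ⊗[k] R₁)
              (((ι R₁ iR₁ aR₁ x₁ : GL (Fin 2) R₁) : Matrix (Fin 2) (Fin 2) R₁) 0 0) := by
        rw [hu]; rfl
      have hMb : ((ι (R ⊗[k] R₁) inferInstance inferInstance x' : GL (Fin 2) (R ⊗[k] R₁)) :
            Matrix (Fin 2) (Fin 2) (R ⊗[k] R₁)) 1 1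
          = (Algebra.TensorProduct.includeRight : R₁ →ₐ[k] R ⊗[k] R₁)
              (((ι R₁ iR₁ aR₁ x₁ : GL (Fin 2) R₁) : Matrix (Fin 2) (Fin 2) R₁) 1 1) := by
        rw [hu]; rfl
      have hab : ((ι (R ⊗[k] R₁) inferInstance inferInstance x' : GL (Fin 2) (R ⊗[k] R₁)) :
            Matrix (Fin 2) (Fin 2) (R ⊗[k] R₁)) 0 0
          ≠ ((ι (R ⊗[k] R₁) inferInstance inferInstance x' : GL (Fin 2) (R ⊗[k] R₁)) :
            Matrix (Fin 2) (Fin 2) (R ⊗[k] R₁)) 1 1 := by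
        rw [hMa, hMb]
        intro hEq
        exact hXne (auxIncRightInj k R R₁ hEq)
      have horS : IsUnit ((Algebra.TensorProduct.includeLeft :
            R →ₐ[k] R ⊗[k] R₁).toRingHom (((g : GL (Fin 2) R) : Matrix (Fin 2) (Fin 2) R) 0 1)) ∨
          IsUnit ((Algebra.TensorProduct.includeLeft :
            R →ₐ[k] R ⊗[k] R₁).toRingHom (((g : GL (Fin 2) R) : Matrix (Fin 2) (Fin 2) R) 1 0)) := by
        rcases hor with h | h
        · exact Or.inl (h.map _)
        · exact Or.inr (h.map _)
      obtain ⟨hcN, hdN, hrel1, hrel2⟩ := auxSite _ g _ _ hy hM01 hM10 hN01 hN10 horS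
      have hp0 : ((g : GL (Fin 2) R) : Matrix (Fin 2) (Fin 2) R) 0 0 = 0 := by
        by_contra hne
        have hpu := (Ne.isUnit hne).map (Algebra.TensorProduct.includeLeft :
          R →ₐ[k] R ⊗[k] R₁).toRingHom
        exact hab (sub_eq_zero.mp (auxCancel hpu hrel1))
      have hs0 : ((g : GL (Fin 2) R) : Matrix (Fin 2) (Fin 2) R) 1 1 = 0 := by
        by_contra hne
        have hsu := (Ne.isUnit hne).map (Algebra.TensorProduct.includeLeft :
          R →ₐ[k] R ⊗[k] R₁).toRingHom
        exact hab (sub_eq_zero.mp (auxCancel hsu hrel2))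
      intro i
      fin_cases i
      · exact hp0
      · exact hs0
    by_cases hq0 : ((g : GL (Fin 2) R) : Matrix (Fin 2) (Fin 2) R) 0 1 = 0
    · by_cases hr0 : ((g : GL (Fin 2) R) : Matrix (Fin 2) (Fin 2) R) 1 0 = 0
      · left
        intro i j hij
        fin_cases i <;> fin_cases j
        · exact absurd rfl hij
        · exact hq0
        · exact hr0
        · exact absurd rfl hij
      · exact Or.inr (main (Or.inr (Ne.isUnit hr0)))
    · exact Or.inr (main (Or.inl (Ne.isUnit hq0)))
  refine ⟨part1, ?_⟩
  intro hwit R iR aR g hg i j hij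
  obtain ⟨R₀, iR₀, aR₀, x₀, hx₀⟩ := hwit
  have h₀01 := hdiag R₀ iR₀ aR₀ x₀ 0 1 (by decide)
  have h₀10 := hdiag R₀ iR₀ aR₀ x₀ 1 0 (by decide)
  haveI hntR₀ : Nontrivial R₀ := by
    rcases subsingleton_or_nontrivial R₀ with hs | hn
    · exfalso
      letI : Subsingleton (Matrix (Fin 2) (Fin 2) R₀) :=
        ⟨fun a b => by ext i' j'; exact Subsingleton.elim _ _⟩
      apply hx₀
      have he : swapGL R₀ * ι R₀ iR₀ aR₀ x₀ * (swapGL R₀)⁻¹ = ι R₀ iR₀ aR₀ x₀ := by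
        apply Units.ext; exact Subsingleton.elim _ _
      rw [he]
      exact ⟨x₀, rfl⟩
    · exact hn
  -- main contradiction: an off-diagonal entry of `g` becoming a unit is impossible
  have keyContr : ∀ (R₂ : Type) (iR₂ : CommRing R₂) (aR₂ : Algebra k R₂)
      (f' : R →ₐ[k] R₂), Nontrivial R₂ →
      (IsUnit (f' (((g : GL (Fin 2) R) : Matrix (Fin 2) (Fin 2) R) 0 1)) ∨
        IsUnit (f' (((g : GL (Fin 2) R) : Matrix (Fin 2) (Fin 2) R) 1 0))) → False := by
    intro R₂ iR₂ aR₂ f' hnt hor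
    haveI := hnt
    set x' : A →ₐ[k] R₂ ⊗[k] R₀ :=
      (Algebra.TensorProduct.includeRight : R₀ →ₐ[k] R₂ ⊗[k] R₀).comp x₀ with hx'def
    set f : R →ₐ[k] R₂ ⊗[k] R₀ :=
      (Algebra.TensorProduct.includeLeft : R₂ →ₐ[k] R₂ ⊗[k] R₀).comp f' with hfdef
    obtain ⟨y, hy⟩ := hg (R₂ ⊗[k] R₀) inferInstance inferInstance f x'
    have hu : ι (R₂ ⊗[k] R₀) inferInstance inferInstance x'
        = Matrix.GeneralLinearGroup.map
            (Algebra.TensorProduct.includeRight : R₀ →ₐ[k] R₂ ⊗[k] R₀).toRingHom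
            (ι R₀ iR₀ aR₀ x₀) :=
      hnat R₀ (R₂ ⊗[k] R₀) iR₀ inferInstance aR₀ inferInstance _ x₀
    have hM01 := hdiag (R₂ ⊗[k] R₀) inferInstance inferInstance x' 0 1 (by decide)
    have hM10 := hdiag (R₂ ⊗[k] R₀) inferInstance inferInstance x' 1 0 (by decide)
    have hN01 := hdiag (R₂ ⊗[k] R₀) inferInstance inferInstance y 0 1 (by decide)
    have hN10 := hdiag (R₂ ⊗[k] R₀) inferInstance inferInstance y 1 0 (by decide)
    have horS : IsUnit (f.toRingHom (((g : GL (Fin 2) R) : Matrix (Fin 2) (Fin 2) R) 0 1)) ∨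
        IsUnit (f.toRingHom (((g : GL (Fin 2) R) : Matrix (Fin 2) (Fin 2) R) 1 0)) := by
      rcases hor with h | h
      · exact Or.inl (h.map
          (Algebra.TensorProduct.includeLeft : R₂ →ₐ[k] R₂ ⊗[k] R₀).toRingHom)
      · exact Or.inr (h.map
          (Algebra.TensorProduct.includeLeft : R₂ →ₐ[k] R₂ ⊗[k] R₀).toRingHom)
    obtain ⟨hcN, hdN, -, -⟩ := auxSite _ g _ _ hy hM01 hM10 hN01 hN10 horS
    obtain ⟨H, hH⟩ := hsub (R₂ ⊗[k] R₀) inferInstance inferInstance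
    have hx'mem : ι (R₂ ⊗[k] R₀) inferInstance inferInstance x' ∈ H := by
      have h1 : ι (R₂ ⊗[k] R₀) inferInstance inferInstance x'
          ∈ Set.range (ι (R₂ ⊗[k] R₀) inferInstance inferInstance) := ⟨x', rfl⟩
      rwa [hH] at h1
    have hymem : ι (R₂ ⊗[k] R₀) inferInstance inferInstance y ∈ H := by
      have h1 : ι (R₂ ⊗[k] R₀) inferInstance inferInstance y
          ∈ Set.range (ι (R₂ ⊗[k] R₀) inferInstance inferInstance) := ⟨y, rfl⟩
      rwa [hH] at h1
    have hzmem : ι (R₂ ⊗[k] R₀) inferInstance inferInstance x' *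
        ι (R₂ ⊗[k] R₀) inferInstance inferInstance y
        ∈ Set.range (ι (R₂ ⊗[k] R₀) inferInstance inferInstance) := by
      rw [hH]
      exact mul_mem hx'mem hymem
    obtain ⟨z, hz⟩ := hzmem
    have hzv : ((ι (R₂ ⊗[k] R₀) inferInstance inferInstance z : GL (Fin 2) (R₂ ⊗[k] R₀)) :
          Matrix (Fin 2) (Fin 2) (R₂ ⊗[k] R₀))
        = ((ι (R₂ ⊗[k] R₀) inferInstance inferInstance x' : GL (Fin 2) (R₂ ⊗[k] R₀)) :
            Matrix (Fin 2) (Fin 2) (R₂ ⊗[k] R₀)) *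
          ((ι (R₂ ⊗[k] R₀) inferInstance inferInstance y : GL (Fin 2) (R₂ ⊗[k] R₀)) :
            Matrix (Fin 2) (Fin 2) (R₂ ⊗[k] R₀)) :=
      congrArg Units.val hz
    have hz01 : ((ι (R₂ ⊗[k] R₀) inferInstance inferInstance z : GL (Fin 2) (R₂ ⊗[k] R₀)) :
        Matrix (Fin 2) (Fin 2) (R₂ ⊗[k] R₀)) 0 1 = 0 := by
      rw [hzv]
      simp [Matrix.mul_apply, Fin.sum_univ_two, hM01, hN01]
    have hz10 : ((ι (R₂ ⊗[k] R₀) inferInstance inferInstance z : GL (Fin 2) (R₂ ⊗[k] R₀)) :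
        Matrix (Fin 2) (Fin 2) (R₂ ⊗[k] R₀)) 1 0 = 0 := by
      rw [hzv]
      simp [Matrix.mul_apply, Fin.sum_univ_two, hM10, hN10]
    have hzdd : ((ι (R₂ ⊗[k] R₀) inferInstance inferInstance z : GL (Fin 2) (R₂ ⊗[k] R₀)) :
          Matrix (Fin 2) (Fin 2) (R₂ ⊗[k] R₀)) 0 0
        = ((ι (R₂ ⊗[k] R₀) inferInstance inferInstance z : GL (Fin 2) (R₂ ⊗[k] R₀)) :
          Matrix (Fin 2) (Fin 2) (R₂ ⊗[k] R₀)) 1 1 := by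
      rw [hzv]
      simp [Matrix.mul_apply, Fin.sum_univ_two, hM01, hM10, hN01, hN10, hcN, hdN, mul_comm]
    have hz1 := hscal (R₂ ⊗[k] R₀) inferInstance inferInstance z hz01 hz10 hzdd
    have hxy1 : ι (R₂ ⊗[k] R₀) inferInstance inferInstance x' *
        ι (R₂ ⊗[k] R₀) inferInstance inferInstance y = 1 := hz.symm.trans hz1
    have hone : ((ι (R₂ ⊗[k] R₀) inferInstance inferInstance x' : GL (Fin 2) (R₂ ⊗[k] R₀)) :
          Matrix (Fin 2) (Fin 2) (R₂ ⊗[k] R₀)) 0 0 *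
        ((ι (R₂ ⊗[k] R₀) inferInstance inferInstance y : GL (Fin 2) (R₂ ⊗[k] R₀)) :
          Matrix (Fin 2) (Fin 2) (R₂ ⊗[k] R₀)) 0 0 = 1 := by
      have h1 := congrArg (fun (u : GL (Fin 2) (R₂ ⊗[k] R₀)) =>
        ((u : Matrix (Fin 2) (Fin 2) (R₂ ⊗[k] R₀)) 0 0)) hxy1
      simpa [Matrix.mul_apply, Fin.sum_univ_two, hM01, hN10, Matrix.one_apply] using h1
    rw [hcN] at hone
    have hMa : ((ι (R₂ ⊗[k] R₀) inferInstance inferInstance x' : GL (Fin 2) (R₂ ⊗[k] R₀)) :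
          Matrix (Fin 2) (Fin 2) (R₂ ⊗[k] R₀)) 0 0
        = (Algebra.TensorProduct.includeRight : R₀ →ₐ[k] R₂ ⊗[k] R₀)
            (((ι R₀ iR₀ aR₀ x₀ : GL (Fin 2) R₀) : Matrix (Fin 2) (Fin 2) R₀) 0 0) := by
      rw [hu]; rfl
    have hMb : ((ι (R₂ ⊗[k] R₀) inferInstance inferInstance x' : GL (Fin 2) (R₂ ⊗[k] R₀)) :
          Matrix (Fin 2) (Fin 2) (R₂ ⊗[k] R₀)) 1 1
        = (Algebra.TensorProduct.includeRight : R₀ →ₐ[k] R₂ ⊗[k] R₀)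
            (((ι R₀ iR₀ aR₀ x₀ : GL (Fin 2) R₀) : Matrix (Fin 2) (Fin 2) R₀) 1 1) := by
      rw [hu]; rfl
    have hab₀ : ((ι R₀ iR₀ aR₀ x₀ : GL (Fin 2) R₀) : Matrix (Fin 2) (Fin 2) R₀) 0 0 *
        ((ι R₀ iR₀ aR₀ x₀ : GL (Fin 2) R₀) : Matrix (Fin 2) (Fin 2) R₀) 1 1 = 1 := by
      apply auxIncRightInj k R₂ R₀
      rw [_root_.map_mul, _root_.map_one, ← hMa, ← hMb]
      exact hone
    have hmat : ((ι R₀ iR₀ aR₀ x₀ : GL (Fin 2) R₀) : Matrix (Fin 2) (Fin 2) R₀)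
        = !![((ι R₀ iR₀ aR₀ x₀ : GL (Fin 2) R₀) : Matrix (Fin 2) (Fin 2) R₀) 0 0, 0;
             0, ((ι R₀ iR₀ aR₀ x₀ : GL (Fin 2) R₀) : Matrix (Fin 2) (Fin 2) R₀) 1 1] := by
      ext i' j'
      fin_cases i' <;> fin_cases j'
      · simp
      · simpa using h₀01
      · simpa using h₀10
      · simp
    have hswap : swapGL R₀ * ι R₀ iR₀ aR₀ x₀ * (swapGL R₀)⁻¹ = (ι R₀ iR₀ aR₀ x₀)⁻¹ := by
      apply eq_inv_of_mul_eq_one_right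
      apply Units.ext
      have hsw : ((swapGL R₀ : GL (Fin 2) R₀) : Matrix (Fin 2) (Fin 2) R₀)
          = !![0, 1; 1, 0] := rfl
      have hswi : (((swapGL R₀)⁻¹ : GL (Fin 2) R₀) : Matrix (Fin 2) (Fin 2) R₀)
          = !![0, 1; 1, 0] := rfl
      show ((ι R₀ iR₀ aR₀ x₀ * (swapGL R₀ * ι R₀ iR₀ aR₀ x₀ * (swapGL R₀)⁻¹) : GL (Fin 2) R₀) :
        Matrix (Fin 2) (Fin 2) R₀) = ((1 : GL (Fin 2) R₀) : Matrix (Fin 2) (Fin 2) R₀)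
      rw [Matrix.GeneralLinearGroup.coe_mul, Matrix.GeneralLinearGroup.coe_mul,
        Matrix.GeneralLinearGroup.coe_mul, Matrix.GeneralLinearGroup.coe_one, hsw, hswi, hmat]
      ext i' j'
      fin_cases i' <;> fin_cases j' <;>
        simp [Matrix.mul_apply, Fin.sum_univ_two, Matrix.one_apply] <;>
        linear_combination hab₀
    rw [hswap] at hx₀
    apply hx₀
    obtain ⟨H₀, hH₀⟩ := hsub R₀ iR₀ aR₀
    have hx₀mem : ι R₀ iR₀ aR₀ x₀ ∈ H₀ := by
      have h1 : ι R₀ iR₀ aR₀ x₀ ∈ Set.range (ι R₀ iR₀ aR₀) := ⟨x₀, rfl⟩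
      rwa [hH₀] at h1
    rw [hH₀]
    exact inv_mem hx₀mem
  -- hence both off-diagonal entries of `g` are nilpotent
  have hnilq : IsNilpotent (((g : GL (Fin 2) R) : Matrix (Fin 2) (Fin 2) R) 0 1) := by
    by_contra hq
    letI aLoc : Algebra k
        (Localization.Away (((g : GL (Fin 2) R) : Matrix (Fin 2) (Fin 2) R) 0 1)) :=
      ((algebraMap R _).comp (algebraMap k R)).toAlgebra
    have hnt : Nontrivial
        (Localization.Away (((g : GL (Fin 2) R) : Matrix (Fin 2) (Fin 2) R) 0 1)) := by
      rcases subsingleton_or_nontrivial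
        (Localization.Away (((g : GL (Fin 2) R) : Matrix (Fin 2) (Fin 2) R) 0 1)) with hs | hn
      · exfalso
        apply hq
        have h10 : (algebraMap R
            (Localization.Away (((g : GL (Fin 2) R) : Matrix (Fin 2) (Fin 2) R) 0 1))) 1 = 0 :=
          Subsingleton.elim _ _
        obtain ⟨⟨m, hm⟩, hm0⟩ := (IsLocalization.map_eq_zero_iff
          (Submonoid.powers (((g : GL (Fin 2) R) : Matrix (Fin 2) (Fin 2) R) 0 1)) _ 1).mp h10
        obtain ⟨n, rfl⟩ := hm
        exact ⟨n, by simpa using hm0⟩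
      · exact hn
    exact keyContr _ inferInstance aLoc ⟨algebraMap R _, fun c => rfl⟩ hnt
      (Or.inl (IsLocalization.Away.algebraMap_isUnit _))
  have hnilr : IsNilpotent (((g : GL (Fin 2) R) : Matrix (Fin 2) (Fin 2) R) 1 0) := by
    by_contra hr
    letI aLoc : Algebra k
        (Localization.Away (((g : GL (Fin 2) R) : Matrix (Fin 2) (Fin 2) R) 1 0)) :=
      ((algebraMap R _).comp (algebraMap k R)).toAlgebra
    have hnt : Nontrivial
        (Localization.Away (((g : GL (Fin 2) R) : Matrix (Fin 2) (Fin 2) R) 1 0)) := by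
      rcases subsingleton_or_nontrivial
        (Localization.Away (((g : GL (Fin 2) R) : Matrix (Fin 2) (Fin 2) R) 1 0)) with hs | hn
      · exfalso
        apply hr
        have h10 : (algebraMap R
            (Localization.Away (((g : GL (Fin 2) R) : Matrix (Fin 2) (Fin 2) R) 1 0))) 1 = 0 :=
          Subsingleton.elim _ _
        obtain ⟨⟨m, hm⟩, hm0⟩ := (IsLocalization.map_eq_zero_iff
          (Submonoid.powers (((g : GL (Fin 2) R) : Matrix (Fin 2) (Fin 2) R) 1 0)) _ 1).mp h10
        obtain ⟨n, rfl⟩ := hm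
        exact ⟨n, by simpa using hm0⟩
      · exact hn
    exact keyContr _ inferInstance aLoc ⟨algebraMap R _, fun c => rfl⟩ hnt
      (Or.inr (IsLocalization.Away.algebraMap_isUnit _))
  -- so the diagonal entries of `g` are units
  have hdetg : IsUnit (((g : GL (Fin 2) R) : Matrix (Fin 2) (Fin 2) R) 0 0 *
      ((g : GL (Fin 2) R) : Matrix (Fin 2) (Fin 2) R) 1 1 -
      ((g : GL (Fin 2) R) : Matrix (Fin 2) (Fin 2) R) 0 1 *
      ((g : GL (Fin 2) R) : Matrix (Fin 2) (Fin 2) R) 1 0) := by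
    rw [← Matrix.det_fin_two]
    exact auxDetUnit g
  have hps : IsUnit (((g : GL (Fin 2) R) : Matrix (Fin 2) (Fin 2) R) 0 0 *
      ((g : GL (Fin 2) R) : Matrix (Fin 2) (Fin 2) R) 1 1) := by
    have h1 : ((g : GL (Fin 2) R) : Matrix (Fin 2) (Fin 2) R) 0 0 *
        ((g : GL (Fin 2) R) : Matrix (Fin 2) (Fin 2) R) 1 1
        = ((g : GL (Fin 2) R) : Matrix (Fin 2) (Fin 2) R) 0 1 *
          ((g : GL (Fin 2) R) : Matrix (Fin 2) (Fin 2) R) 1 0 +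
          (((g : GL (Fin 2) R) : Matrix (Fin 2) (Fin 2) R) 0 0 *
          ((g : GL (Fin 2) R) : Matrix (Fin 2) (Fin 2) R) 1 1 -
          ((g : GL (Fin 2) R) : Matrix (Fin 2) (Fin 2) R) 0 1 *
          ((g : GL (Fin 2) R) : Matrix (Fin 2) (Fin 2) R) 1 0) := by ring
    rw [h1]
    exact ((Commute.all _ _).isNilpotent_mul_right hnilq).isUnit_add_right_of_commute hdetg
      (Commute.all _ _)
  have hpu : IsUnit (((g : GL (Fin 2) R) : Matrix (Fin 2) (Fin 2) R) 0 0) :=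
    isUnit_of_mul_isUnit_left hps
  have hsu : IsUnit (((g : GL (Fin 2) R) : Matrix (Fin 2) (Fin 2) R) 1 1) :=
    isUnit_of_mul_isUnit_right hps
  -- the universal point over `R ⊗ A`
  obtain ⟨y, hy⟩ := hg (R ⊗[k] A) inferInstance inferInstance
    (Algebra.TensorProduct.includeLeft : R →ₐ[k] R ⊗[k] A)
    (Algebra.TensorProduct.includeRight : A →ₐ[k] R ⊗[k] A)
  have hu : ι (R ⊗[k] A) inferInstance inferInstance
      ((Algebra.TensorProduct.includeRight : A →ₐ[k] R ⊗[k] A).comp (AlgHom.id k A))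
      = Matrix.GeneralLinearGroup.map
          (Algebra.TensorProduct.includeRight : A →ₐ[k] R ⊗[k] A).toRingHom
          (ι A inferInstance inferInstance (AlgHom.id k A)) :=
    hnat A (R ⊗[k] A) inferInstance inferInstance inferInstance inferInstance _ (AlgHom.id k A)
  rw [AlgHom.comp_id] at hu
  have hM01 := hdiag (R ⊗[k] A) inferInstance inferInstance
    (Algebra.TensorProduct.includeRight : A →ₐ[k] R ⊗[k] A) 0 1 (by decide)
  have hM10 := hdiag (R ⊗[k] A) inferInstance inferInstance
    (Algebra.TensorProduct.includeRight : A →ₐ[k] R ⊗[k] A) 1 0 (by decide)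
  have hN01 := hdiag (R ⊗[k] A) inferInstance inferInstance y 0 1 (by decide)
  have hN10 := hdiag (R ⊗[k] A) inferInstance inferInstance y 1 0 (by decide)
  obtain ⟨hqrel, hrrel⟩ := auxSite2
    (Algebra.TensorProduct.includeLeft : R →ₐ[k] R ⊗[k] A).toRingHom g _ _ hy
    hM01 hM10 hN01 hN10
    (hpu.map (Algebra.TensorProduct.includeLeft : R →ₐ[k] R ⊗[k] A).toRingHom)
    (hsu.map (Algebra.TensorProduct.includeLeft : R →ₐ[k] R ⊗[k] A).toRingHom)
  have hMa : ((ι (R ⊗[k] A) inferInstance inferInstance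
        (Algebra.TensorProduct.includeRight : A →ₐ[k] R ⊗[k] A) : GL (Fin 2) (R ⊗[k] A)) :
        Matrix (Fin 2) (Fin 2) (R ⊗[k] A)) 0 0
      = (Algebra.TensorProduct.includeRight : A →ₐ[k] R ⊗[k] A)
          (((ι A inferInstance inferInstance (AlgHom.id k A) : GL (Fin 2) A) :
            Matrix (Fin 2) (Fin 2) A) 0 0) := by
    rw [hu]; rfl
  have hMb : ((ι (R ⊗[k] A) inferInstance inferInstance
        (Algebra.TensorProduct.includeRight : A →ₐ[k] R ⊗[k] A) : GL (Fin 2) (R ⊗[k] A)) :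
        Matrix (Fin 2) (Fin 2) (R ⊗[k] A)) 1 1
      = (Algebra.TensorProduct.includeRight : A →ₐ[k] R ⊗[k] A)
          (((ι A inferInstance inferInstance (AlgHom.id k A) : GL (Fin 2) A) :
            Matrix (Fin 2) (Fin 2) A) 1 1) := by
    rw [hu]; rfl
  have hαβ : ((ι A inferInstance inferInstance (AlgHom.id k A) : GL (Fin 2) A) :
        Matrix (Fin 2) (Fin 2) A) 0 0
      ≠ ((ι A inferInstance inferInstance (AlgHom.id k A) : GL (Fin 2) A) :
        Matrix (Fin 2) (Fin 2) A) 1 1 := by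
    intro hEq
    have h1 : ι A inferInstance inferInstance (AlgHom.id k A) = 1 :=
      hscal A inferInstance inferInstance (AlgHom.id k A)
        (hdiag A inferInstance inferInstance (AlgHom.id k A) 0 1 (by decide))
        (hdiag A inferInstance inferInstance (AlgHom.id k A) 1 0 (by decide)) hEq
    have h2 : ι R₀ iR₀ aR₀ x₀ = 1 := by
      have h3 := hnat A R₀ inferInstance iR₀ inferInstance aR₀ x₀ (AlgHom.id k A)
      rw [AlgHom.comp_id, h1] at h3
      rw [h3]
      exact map_one _
    apply hx₀
    rw [h2]
    refine ⟨(Algebra.ofId k R₀).comp ε, ?_⟩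
    rw [hε R₀ iR₀ aR₀]
    simp
  have htensq : (((g : GL (Fin 2) R) : Matrix (Fin 2) (Fin 2) R) 0 1) ⊗ₜ[k]
      (((ι A inferInstance inferInstance (AlgHom.id k A) : GL (Fin 2) A) :
        Matrix (Fin 2) (Fin 2) A) 0 0 -
       ((ι A inferInstance inferInstance (AlgHom.id k A) : GL (Fin 2) A) :
        Matrix (Fin 2) (Fin 2) A) 1 1) = 0 := by
    have h5 : ((((g : GL (Fin 2) R) : Matrix (Fin 2) (Fin 2) R) 0 1) ⊗ₜ[k] (1 : A)) *
        (((ι (R ⊗[k] A) inferInstance inferInstance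
            (Algebra.TensorProduct.includeRight : A →ₐ[k] R ⊗[k] A) : GL (Fin 2) (R ⊗[k] A)) :
            Matrix (Fin 2) (Fin 2) (R ⊗[k] A)) 0 0 -
          ((ι (R ⊗[k] A) inferInstance inferInstance
            (Algebra.TensorProduct.includeRight : A →ₐ[k] R ⊗[k] A) : GL (Fin 2) (R ⊗[k] A)) :
            Matrix (Fin 2) (Fin 2) (R ⊗[k] A)) 1 1) = 0 := hqrel
    have h7 : ((ι (R ⊗[k] A) inferInstance inferInstance
          (Algebra.TensorProduct.includeRight : A →ₐ[k] R ⊗[k] A) : GL (Fin 2) (R ⊗[k] A)) :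
          Matrix (Fin 2) (Fin 2) (R ⊗[k] A)) 0 0 -
        ((ι (R ⊗[k] A) inferInstance inferInstance
          (Algebra.TensorProduct.includeRight : A →ₐ[k] R ⊗[k] A) : GL (Fin 2) (R ⊗[k] A)) :
          Matrix (Fin 2) (Fin 2) (R ⊗[k] A)) 1 1
        = (1 : R) ⊗ₜ[k]
          (((ι A inferInstance inferInstance (AlgHom.id k A) : GL (Fin 2) A) :
            Matrix (Fin 2) (Fin 2) A) 0 0 -
           ((ι A inferInstance inferInstance (AlgHom.id k A) : GL (Fin 2) A) :
            Matrix (Fin 2) (Fin 2) A) 1 1) := by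
      rw [hMa, hMb, ← _root_.map_sub]
      rfl
    calc (((g : GL (Fin 2) R) : Matrix (Fin 2) (Fin 2) R) 0 1) ⊗ₜ[k]
        (((ι A inferInstance inferInstance (AlgHom.id k A) : GL (Fin 2) A) :
          Matrix (Fin 2) (Fin 2) A) 0 0 -
         ((ι A inferInstance inferInstance (AlgHom.id k A) : GL (Fin 2) A) :
          Matrix (Fin 2) (Fin 2) A) 1 1)
        = ((((g : GL (Fin 2) R) : Matrix (Fin 2) (Fin 2) R) 0 1) ⊗ₜ[k] (1 : A)) *
          ((1 : R) ⊗ₜ[k]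
            (((ι A inferInstance inferInstance (AlgHom.id k A) : GL (Fin 2) A) :
              Matrix (Fin 2) (Fin 2) A) 0 0 -
             ((ι A inferInstance inferInstance (AlgHom.id k A) : GL (Fin 2) A) :
              Matrix (Fin 2) (Fin 2) A) 1 1)) := by
          rw [Algebra.TensorProduct.tmul_mul_tmul, mul_one, one_mul]
      _ = 0 := by rw [← h7]; exact h5
  have htensr : (((g : GL (Fin 2) R) : Matrix (Fin 2) (Fin 2) R) 1 0) ⊗ₜ[k]
      (((ι A inferInstance inferInstance (AlgHom.id k A) : GL (Fin 2) A) :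
        Matrix (Fin 2) (Fin 2) A) 0 0 -
       ((ι A inferInstance inferInstance (AlgHom.id k A) : GL (Fin 2) A) :
        Matrix (Fin 2) (Fin 2) A) 1 1) = 0 := by
    have h5 : ((((g : GL (Fin 2) R) : Matrix (Fin 2) (Fin 2) R) 1 0) ⊗ₜ[k] (1 : A)) *
        (((ι (R ⊗[k] A) inferInstance inferInstance
            (Algebra.TensorProduct.includeRight : A →ₐ[k] R ⊗[k] A) : GL (Fin 2) (R ⊗[k] A)) :
            Matrix (Fin 2) (Fin 2) (R ⊗[k] A)) 0 0 -
          ((ι (R ⊗[k] A) inferInstance inferInstance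
            (Algebra.TensorProduct.includeRight : A →ₐ[k] R ⊗[k] A) : GL (Fin 2) (R ⊗[k] A)) :
            Matrix (Fin 2) (Fin 2) (R ⊗[k] A)) 1 1) = 0 := hrrel
    have h7 : ((ι (R ⊗[k] A) inferInstance inferInstance
          (Algebra.TensorProduct.includeRight : A →ₐ[k] R ⊗[k] A) : GL (Fin 2) (R ⊗[k] A)) :
          Matrix (Fin 2) (Fin 2) (R ⊗[k] A)) 0 0 -
        ((ι (R ⊗[k] A) inferInstance inferInstance
          (Algebra.TensorProduct.includeRight : A →ₐ[k] R ⊗[k] A) : GL (Fin 2) (R ⊗[k] A)) :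
          Matrix (Fin 2) (Fin 2) (R ⊗[k] A)) 1 1
        = (1 : R) ⊗ₜ[k]
          (((ι A inferInstance inferInstance (AlgHom.id k A) : GL (Fin 2) A) :
            Matrix (Fin 2) (Fin 2) A) 0 0 -
           ((ι A inferInstance inferInstance (AlgHom.id k A) : GL (Fin 2) A) :
            Matrix (Fin 2) (Fin 2) A) 1 1) := by
      rw [hMa, hMb, ← _root_.map_sub]
      rfl
    calc (((g : GL (Fin 2) R) : Matrix (Fin 2) (Fin 2) R) 1 0) ⊗ₜ[k]
        (((ι A inferInstance inferInstance (AlgHom.id k A) : GL (Fin 2) A) :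
          Matrix (Fin 2) (Fin 2) A) 0 0 -
         ((ι A inferInstance inferInstance (AlgHom.id k A) : GL (Fin 2) A) :
          Matrix (Fin 2) (Fin 2) A) 1 1)
        = ((((g : GL (Fin 2) R) : Matrix (Fin 2) (Fin 2) R) 1 0) ⊗ₜ[k] (1 : A)) *
          ((1 : R) ⊗ₜ[k]
            (((ι A inferInstance inferInstance (AlgHom.id k A) : GL (Fin 2) A) :
              Matrix (Fin 2) (Fin 2) A) 0 0 -
             ((ι A inferInstance inferInstance (AlgHom.id k A) : GL (Fin 2) A) :
              Matrix (Fin 2) (Fin 2) A) 1 1)) := by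
          rw [Algebra.TensorProduct.tmul_mul_tmul, mul_one, one_mul]
      _ = 0 := by rw [← h7]; exact h5
  obtain ⟨φ, hφ⟩ : ∃ φ : Module.Dual k A,
      φ (((ι A inferInstance inferInstance (AlgHom.id k A) : GL (Fin 2) A) :
        Matrix (Fin 2) (Fin 2) A) 0 0 -
       ((ι A inferInstance inferInstance (AlgHom.id k A) : GL (Fin 2) A) :
        Matrix (Fin 2) (Fin 2) A) 1 1) ≠ 0 := by
    by_contra hfa
    push_neg at hfa
    exact (sub_ne_zero.mpr hαβ) ((Module.forall_dual_apply_eq_zero_iff k _).mp hfa)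
  have hq0 : ((g : GL (Fin 2) R) : Matrix (Fin 2) (Fin 2) R) 0 1 = 0 := by
    have happ := congrArg (fun t => (TensorProduct.rid k R) ((LinearMap.lTensor R φ) t)) htensq
    simp only [LinearMap.lTensor_tmul, TensorProduct.rid_tmul, map_zero] at happ
    rcases smul_eq_zero.mp happ with h | h
    · exact absurd h hφ
    · exact h
  have hr0 : ((g : GL (Fin 2) R) : Matrix (Fin 2) (Fin 2) R) 1 0 = 0 := by
    have happ := congrArg (fun t => (TensorProduct.rid k R) ((LinearMap.lTensor R φ) t)) htensr
    simp only [LinearMap.lTensor_tmul, TensorProduct.rid_tmul, map_zero] at happ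
    rcases smul_eq_zero.mp happ with h | h
    · exact absurd h hφ
    · exact h
  fin_cases i <;> fin_cases j
  · exact absurd rfl hij
  · exact hq0
  · exact hr0
  · exact absurd rfl hij
end

section
/- Over a field k of characteristic p > 0, every finite subgroup scheme of the additive group 𝔾_a that is infinitesimal (i.e., connected) is equal to α_{p^n} = Spec k[x]/(x^{p^n}) (the kernel of the n-th power of Frobenius on 𝔾_a) for some n ≥ 0. -/
open Polynomial TensorProduct

/-- The comultiplication of the additive group scheme `𝔾ₐ = Spec k[X]`:
`Δ(X) = X ⊗ 1 + 1 ⊗ X`. -/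
noncomputable def GaComul (k : Type*) [CommRing k] :
    Polynomial k →ₐ[k] Polynomial k ⊗[k] Polynomial k :=
  aeval ((X : Polynomial k) ⊗ₜ 1 + 1 ⊗ₜ (X : Polynomial k))

/-- The counit of `𝔾ₐ`: evaluation at `0`. -/
noncomputable def GaCounit (k : Type*) [CommRing k] : Polynomial k →ₐ[k] k :=
  aeval (0 : k)

/-- The antipode of `𝔾ₐ`: `X ↦ -X`. -/
noncomputable def GaAntipode (k : Type*) [CommRing k] : Polynomial k →ₐ[k] Polynomial k :=
  aeval (-(X : Polynomial k))

lemma auxSum {k : Type*} [Field k] {d : ℕ} (hd : 0 < d)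
    (H : ∀ i, 0 < i → i < d → ((d.choose i : k)) = 0) :
    ((X + 1 : Polynomial k)) ^ d = X ^ d + 1 := by
  ext j
  rw [coeff_X_add_one_pow, coeff_add, coeff_X_pow, coeff_one]
  rcases eq_or_ne j 0 with rfl | hj0
  · simp [hd.ne', ne_of_lt hd]
  rcases eq_or_ne j d with rfl | hjd
  · simp [hj0, Nat.choose_self]
  rcases lt_or_ge j d with hlt | hle
  · simp [hjd, hj0, H j (Nat.pos_of_ne_zero hj0) hlt]
  · simp [hjd, hj0, Nat.choose_eq_zero_of_lt (lt_of_le_of_ne hle (Ne.symm hjd))]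

lemma auxPow {k : Type*} [Field k] {p : ℕ} [Fact p.Prime] [CharP k p] (d : ℕ) (hd : 0 < d)
    (hpoly : ((X + 1 : Polynomial k)) ^ d = X ^ d + 1) : ∃ n, d = p ^ n := by
  induction d using Nat.strong_induction_on with
  | _ d ih =>
  rcases eq_or_lt_of_le (Nat.one_le_iff_ne_zero.mpr hd.ne') with h1 | h2
  · exact ⟨0, h1.symm⟩
  have hdk : (d : k) = 0 := by
    have := congrArg (fun q => Polynomial.coeff q 1) hpoly
    simpa [coeff_X_add_one_pow, coeff_X_pow, coeff_one, h2.ne] using this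
  obtain ⟨e, rfl⟩ := (CharP.cast_eq_zero_iff k p d).mp hdk
  have hp1 : 1 < p := (Fact.out : p.Prime).one_lt
  have he : 0 < e := by
    rcases Nat.eq_zero_or_pos e with rfl | h
    · simp at hd
    · exact h
  have helt : e < p * e := lt_mul_left he hp1
  have hpe : ((X + 1 : Polynomial k)) ^ e = X ^ e + 1 := by
    apply expand_injective (n := p) (Nat.lt_of_lt_of_le Nat.zero_lt_one hp1.le)
    have hfr : ((X : Polynomial k) + 1) ^ p = X ^ p + 1 := by
      simpa using add_pow_char (p := p) (X : Polynomial k) 1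
    rw [map_pow, map_add, expand_X, map_one, map_add, map_one, map_pow, expand_X,
      ← hfr, ← pow_mul, hpoly, ← pow_mul]
  obtain ⟨n, rfl⟩ := ih e helt he hpe
  exact ⟨n + 1, by ring⟩


set_option maxHeartbeats 1600000 in
set_option synthInstance.maxHeartbeats 400000 in
/-- over a field `k` of characteristic `p > 0`, every infinitesimal
(connected) finite subgroup scheme of `𝔾ₐ` equals `α_{p^n} = Spec k[X]/(X^{p^n})` for some
`n ≥ 0`.  A subgroup scheme of `𝔾ₐ` corresponds to a Hopf ideal `I ⊆ k[X]`; finiteness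
means that `k[X]/I` is finite dimensional, and being infinitesimal means `k[X]/I` is local
with residue field `k` (a single point).  The conclusion is `I = (X^{p^n})`. -/
theorem stmt11 (k : Type*) [Field k] (p : ℕ) [Fact p.Prime] [CharP k p]
    (I : Ideal (Polynomial k))
    -- `I` is a Hopf ideal:
    (hcomul : ∀ a ∈ I, GaComul k a ∈
      I.map (Algebra.TensorProduct.includeLeft :
          Polynomial k →ₐ[k] Polynomial k ⊗[k] Polynomial k).toRingHom ⊔
      I.map (Algebra.TensorProduct.includeRight :
          Polynomial k →ₐ[k] Polynomial k ⊗[k] Polynomial k).toRingHom)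
    (hcounit : ∀ a ∈ I, GaCounit k a = 0)
    (hantipode : ∀ a ∈ I, GaAntipode k a ∈ I)
    -- the subgroup scheme is finite:
    (hfin : FiniteDimensional k (Polynomial k ⧸ I))
    -- and infinitesimal (connected, one point with residue field `k`):
    (hconn : IsLocalRing (Polynomial k ⧸ I))
    (hres : Function.Bijective
      (IsLocalRing.residue (Polynomial k ⧸ I) ∘ algebraMap k (Polynomial k ⧸ I))) :
    ∃ n : ℕ, I = Ideal.span {(X : Polynomial k) ^ p ^ n} := by
  classical
  -- The quotient is an Artinian local ring, so its maximal ideal is nilpotent.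
  haveI : IsArtinianRing (Polynomial k ⧸ I) :=
    isArtinian_of_tower k (inferInstance : IsArtinian k (Polynomial k ⧸ I))
  obtain ⟨N, hN⟩ := IsArtinianRing.isNilpotent_jacobson_bot (R := Polynomial k ⧸ I)
  rw [IsLocalRing.jacobson_eq_maximalIdeal ⊥ bot_ne_top] at hN
  -- Find `c : k` whose residue agrees with that of `X`.
  obtain ⟨c, hc⟩ := hres.2 (IsLocalRing.residue _ (Ideal.Quotient.mk I X))
  have hy : Ideal.Quotient.mk I (X - C c) ∈ IsLocalRing.maximalIdeal (Polynomial k ⧸ I) := by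
    rw [← Ideal.Quotient.eq_zero_iff_mem]
    show IsLocalRing.residue _ ((Ideal.Quotient.mk I) (X - C c)) = 0
    rw [map_sub, map_sub, sub_eq_zero]
    rw [Function.comp_apply] at hc
    rw [← hc]
    rfl
  have hXcN : (X - C c) ^ (N + 1) ∈ I := by
    rw [← Ideal.Quotient.eq_zero_iff_mem, map_pow]
    have h1 : (Ideal.Quotient.mk I (X - C c)) ^ (N + 1) ∈
        (IsLocalRing.maximalIdeal (Polynomial k ⧸ I)) ^ (N + 1) := Ideal.pow_mem_pow hy _
    have h2 : (IsLocalRing.maximalIdeal (Polynomial k ⧸ I)) ^ (N + 1) ≤ ⊥ :=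
      (Ideal.pow_le_pow_right (Nat.le_succ N)).trans hN.le
    simpa using h2 h1
  -- counit kills `I`, forcing `c = 0`, so `X ^ (N+1) ∈ I`.
  have hc0 : c = 0 := by
    have h := hcounit _ hXcN
    simp only [GaCounit, map_pow, map_sub, aeval_X, aeval_C, Algebra.algebraMap_self_apply] at h
    have h2 := pow_eq_zero_iff (Nat.succ_ne_zero N) |>.mp h
    simpa [zero_sub, neg_eq_zero] using h2
  rw [hc0, map_zero, sub_zero] at hXcN
  -- `I` is principal, generated by a divisor of `X ^ (N+1)`, hence by a power of `X`.
  obtain ⟨f, hfI⟩ := Submodule.IsPrincipal.principal I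
  have hfdvd : f ∣ X ^ (N + 1) := by
    rw [Ideal.submodule_span_eq] at hfI
    rw [← Ideal.mem_span_singleton, ← hfI]
    exact hXcN
  obtain ⟨d, hdN, hassoc⟩ := (dvd_prime_pow Polynomial.prime_X (N + 1)).mp hfdvd
  have hI : I = Ideal.span {(X : Polynomial k) ^ d} := by
    rw [hfI]
    exact (Ideal.span_singleton_eq_span_singleton.mpr hassoc)
  have hnontriv : (1 : Polynomial k) ∉ I := by
    intro h1
    have : (1 : Polynomial k ⧸ I) = 0 := by
      rw [← map_one (Ideal.Quotient.mk I), Ideal.Quotient.eq_zero_iff_mem]; exact h1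
    exact one_ne_zero this
  have hd0 : 0 < d := by
    rcases Nat.eq_zero_or_pos d with rfl | h
    · exact absurd (hI ▸ Ideal.subset_span (by simp)) (by simpa using hnontriv)
    · exact h
  -- The Hopf condition forces the binomial coefficients to vanish.
  have hch : ∀ i, 0 < i → i < d → ((d.choose i : k)) = 0 := by
    intro i hi0 hid
    set ψ : Polynomial k ⊗[k] Polynomial k →ₐ[k] Polynomial (Polynomial k) :=
      Algebra.TensorProduct.productMap (aeval (C X)) (aeval X) with hψdef
    have hmem : (X : Polynomial k) ^ d ∈ I := by rw [hI]; exact Ideal.subset_span rfl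
    have h := hcomul _ hmem
    have h2 := Ideal.mem_map_of_mem ψ.toRingHom h
    rw [Ideal.map_sup, Ideal.map_map, Ideal.map_map, hI, Ideal.map_span, Ideal.map_span,
      Set.image_singleton, Set.image_singleton] at h2
    have e1 : (ψ.toRingHom.comp (Algebra.TensorProduct.includeLeft :
        Polynomial k →ₐ[k] Polynomial k ⊗[k] Polynomial k).toRingHom) ((X : Polynomial k) ^ d)
        = (C (X : Polynomial k)) ^ d := by
      simp [hψdef, Algebra.TensorProduct.productMap_apply_tmul]
    have e2 : (ψ.toRingHom.comp (Algebra.TensorProduct.includeRight :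
        Polynomial k →ₐ[k] Polynomial k ⊗[k] Polynomial k).toRingHom) ((X : Polynomial k) ^ d)
        = (X : Polynomial (Polynomial k)) ^ d := by
      simp [hψdef, Algebra.TensorProduct.productMap_apply_tmul]
    rw [e1, e2] at h2
    have e3 : ψ (GaComul k ((X : Polynomial k) ^ d)) =
        ((X : Polynomial (Polynomial k)) + C X) ^ d := by
      rw [GaComul, map_pow, aeval_X, map_pow, map_add]
      simp [hψdef, Algebra.TensorProduct.productMap_apply_tmul, add_comm]
    have e3' : ψ.toRingHom (GaComul k ((X : Polynomial k) ^ d)) =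
        ((X : Polynomial (Polynomial k)) + C X) ^ d := e3
    rw [e3', ← Ideal.span_union, Set.singleton_union] at h2
    obtain ⟨u, v, huv⟩ := Ideal.mem_span_pair.mp h2
    -- take coefficient `i` (in the outer variable)
    have h4 := congrArg (fun q => Polynomial.coeff q i) huv
    rw [coeff_add, ← map_pow, coeff_mul_C, coeff_mul_X_pow', if_neg (not_le.mpr hid),
      coeff_X_add_C_pow, add_zero] at h4
    -- take coefficient `d - i` (in the inner variable)
    have h5 := congrArg (fun q => Polynomial.coeff q (d - i)) h4
    rw [coeff_mul_X_pow', if_neg (by omega : ¬ d ≤ d - i),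
      mul_comm ((X : Polynomial k) ^ (d - i)), coeff_mul_X_pow', if_pos le_rfl,
      Nat.sub_self, ← C_eq_natCast, coeff_C, if_pos rfl] at h5
    exact h5.symm
  obtain ⟨n, hn⟩ := auxPow (p := p) d hd0 (auxSum hd0 hch)
  exact ⟨n, by rw [hI, hn]⟩
end
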